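/- Let q be a prime power and n = q^2. Let α_1 = 0 and α_2, ..., α_n be all (q^2-1)-th roots of unity in F_{q^2}. Let A_∞ be the n×(n+1) matrix whose row j (for j = 0,...,n-1) is (α_1^j, ..., α_n^j, δ_{j,n-1}), where the last column is all zeros except a 1 in the last row. Then A_∞ x^T = 0 has a nonzero solution in F_q^{n+1}. -/

import Mathlib

open Finset in
lemma sum_pow_card_sub_one' {K : Type*} [Field K] [Fintype K] :
    ∑ x : K, x ^ (Fintype.card K - 1) = -1 := by
  classical
  have hcard : 1 < Fintype.card K := Fintype.one_lt_card
  have h0 : (0 : K) ^ (Fintype.card K - 1) = 0 :=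
    zero_pow (by omega)
  let φ : Kˣ ↪ K := ⟨fun x ↦ x, Units.val_injective⟩
  have hmap : univ.map φ = univ \ {(0 : K)} := by
    ext x
    simpa only [mem_map, mem_univ, Function.Embedding.coeFn_mk, true_and, mem_sdiff,
      mem_singleton, φ, IsUnit, ne_eq] using isUnit_iff_ne_zero
  calc
    ∑ x : K, x ^ (Fintype.card K - 1)
        = ∑ x ∈ univ \ {(0 : K)}, x ^ (Fintype.card K - 1) := by
      rw [← sum_sdiff ({0} : Finset K).subset_univ, sum_singleton, h0, add_zero]
    _ = ∑ x : Kˣ, ((x : K) ^ (Fintype.card K - 1)) := by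
      simp [φ, ← hmap, univ.sum_map φ]
    _ = -1 := by
      rw [FiniteField.sum_pow_units K, if_pos dvd_rfl]


/-- Example 2.5: let `n = q²`, `α₁ = 0` and `α₂, …, α_n` all `(q²-1)`-th roots of unity
(so the `αᵢ` enumerate all of `F_{q²}`).  The `n × (n+1)` system `A_∞ xᵀ = 0`, where row
`j` of `A_∞` is `(α₁ʲ, …, α_nʲ, δ_{j,n-1})`, has a nonzero solution in `F_q^{n+1}`. -/
theorem stmt6 {F : Type*} [Field F] [Fintype F] (q : ℕ) (hF : Fintype.card F = q ^ 2)
    (α : Fin (q ^ 2) → F) (hbij : Function.Bijective α)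
    (h0 : ∀ i : Fin (q ^ 2), (i : ℕ) = 0 → α i = 0) :
    ∃ x : Fin (q ^ 2 + 1) → F, x ≠ 0 ∧
      (Matrix.of fun (j : Fin (q ^ 2)) (i : Fin (q ^ 2 + 1)) =>
          if h : (i : ℕ) < q ^ 2 then (α ⟨i, h⟩) ^ (j : ℕ)
          else if (j : ℕ) = q ^ 2 - 1 then 1 else 0).mulVec x = 0 ∧
      ∀ i, (x i) ^ q = x i := by
  classical
  refine ⟨fun _ => 1, ?_, ?_, fun i => one_pow q⟩
  · intro h
    have := congrFun h 0
    simp at this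
  · funext j
    have hsum : ∀ m : ℕ, ∑ i : Fin (q ^ 2), (α i) ^ m = ∑ x : F, x ^ m := fun m =>
      Fintype.sum_bijective α hbij _ _ (fun i => rfl)
    simp only [Matrix.mulVec, dotProduct, Matrix.of_apply, mul_one,
      Pi.zero_apply]
    rw [Fin.sum_univ_castSucc]
    have hlast : ¬ ((Fin.last (q ^ 2) : Fin (q ^ 2 + 1)) : ℕ) < q ^ 2 := by simp
    rw [dif_neg hlast]
    have hrest : ∑ i : Fin (q ^ 2),
        (if h : ((Fin.castSucc i : Fin (q ^ 2 + 1)) : ℕ) < q ^ 2 then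
          (α ⟨(Fin.castSucc i : Fin (q ^ 2 + 1)), h⟩) ^ (j : ℕ)
         else if (j : ℕ) = q ^ 2 - 1 then 1 else 0) = ∑ x : F, x ^ (j : ℕ) := by
      rw [← hsum]
      refine Finset.sum_congr rfl fun i _ => ?_
      rw [dif_pos (by simp [i.isLt] : ((Fin.castSucc i : Fin (q ^ 2 + 1)) : ℕ) < q ^ 2)]; congr 1
    rw [hrest]
    by_cases hj : (j : ℕ) = q ^ 2 - 1
    · rw [if_pos hj, hj, ← hF, sum_pow_card_sub_one']
      ring
    · rw [if_neg hj, add_zero]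
      apply FiniteField.sum_pow_lt_card_sub_one
      rw [hF]
      omega
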